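/- Let P_opt = min{ tr(R) : R ⪰ 0, log det(I + H R Hᴴ) ≥ γ } be attained at R_opt (γ > 0, H ≠ 0). Then R_opt also solves max{ log det(I + H R Hᴴ) : R ⪰ 0, tr(R) ≤ P_opt }, the optimal value of the latter problem equals γ, and the QoS constraint holds with equality at R_opt. -/

import Mathlib

open Matrix ComplexOrder

private lemma psd_smul_aux {n : ℕ} {S : Matrix (Fin n) (Fin n) ℂ} (hS : S.PosSemidef)
    {t : ℝ} (ht : 0 ≤ t) : (t • S).PosSemidef := by
  rw [posSemidef_iff_dotProduct_mulVec]
  constructor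
  · show (t • S)ᴴ = t • S
    rw [conjTranspose_smul, star_trivial, hS.1.eq]
  · intro x
    have h0 := hS.dotProduct_mulVec_nonneg x
    have : star x ⬝ᵥ (t • S) *ᵥ x = t • (star x ⬝ᵥ S *ᵥ x) := by
      rw [smul_mulVec, dotProduct_smul]
    rw [this]
    rw [Complex.nonneg_iff] at h0 ⊢
    refine ⟨?_, ?_⟩
    · rw [Complex.smul_re]
      exact mul_nonneg ht h0.1
    · rw [Complex.smul_im, ← h0.2, smul_zero]

private lemma trace_re_pos_aux {n : ℕ} {S : Matrix (Fin n) (Fin n) ℂ} (hS : S.PosSemidef)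
    (hne : S ≠ 0) : 0 < S.trace.re := by
  classical
  have key : ∀ i, star (Pi.single i (1:ℂ)) ⬝ᵥ S *ᵥ Pi.single i 1 = S i i := by
    intro i
    have hstar : star (Pi.single i (1:ℂ)) = (Pi.single i 1 : Fin n → ℂ) := by
      funext j
      rw [Pi.star_apply]
      by_cases h : j = i
      · subst h; simp
      · simp [Pi.single_eq_of_ne h]
    rw [hstar, mulVec_single, single_dotProduct]
    simp
  have hdiag : ∀ i, 0 ≤ S i i := fun i => key i ▸ hS.dotProduct_mulVec_nonneg (Pi.single i 1)
  have hre : ∀ i, 0 ≤ (S i i).re := fun i => (Complex.nonneg_iff.mp (hdiag i)).1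
  have htr : S.trace.re = ∑ i, (S i i).re := by
    simp [Matrix.trace, Matrix.diag, Complex.re_sum]
  rcases lt_or_eq_of_le (Finset.sum_nonneg fun i _ => hre i) with h | h
  · rw [htr]; exact h
  · exfalso
    apply hne
    have hzero : ∀ i, S i i = 0 := by
      intro i
      have := (Finset.sum_eq_zero_iff_of_nonneg (fun i _ => hre i)).mp h.symm i (by simp)
      have him := (Complex.nonneg_iff.mp (hdiag i)).2
      exact Complex.ext this him.symm
    have hcol : ∀ i, S *ᵥ Pi.single i 1 = 0 := fun i =>
      (hS.dotProduct_mulVec_zero_iff _).mp (by rw [key i, hzero i])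
    ext j i
    have := congrFun (hcol i) j
    rw [mulVec_single] at this
    simpa using this

private lemma scale_down_aux {d m : ℕ} (H : Matrix (Fin d) (Fin m) ℂ) (γ : ℝ)
    (S : Matrix (Fin m) (Fin m) ℂ)
    (h : γ < Real.log ((1 + H * S * Hᴴ).det.re))
    (hpos : (1 + H * S * Hᴴ).det.re ≠ 0) :
    ∃ t : ℝ, 0 < t ∧ t < 1 ∧ γ ≤ Real.log ((1 + H * (t • S) * Hᴴ).det.re) := by
  set A := H * S * Hᴴ with hA
  have hrw : ∀ t : ℝ, H * (t • S) * Hᴴ = t • A := by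
    intro t
    rw [hA, Matrix.mul_smul, Matrix.smul_mul]
  have hg : Continuous fun t : ℝ => ((1 + t • A).det).re :=
    Complex.continuous_re.comp ((continuous_const.add
      (continuous_id.smul continuous_const)).matrix_det)
  have hg1 : ((1 + (1:ℝ) • A).det).re ≠ 0 := by simpa using hpos
  have hcontAt : ContinuousAt (fun t : ℝ => Real.log (((1 + t • A).det).re)) 1 :=
    hg.continuousAt.log hg1
  have h1 : γ < Real.log (((1 + (1:ℝ) • A).det).re) := by simpa using h
  have hev : ∀ᶠ t in nhds (1:ℝ), γ < Real.log (((1 + t • A).det).re) :=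
    hcontAt.eventually (eventually_gt_nhds h1)
  rw [Metric.eventually_nhds_iff] at hev
  obtain ⟨ε, hε, hball⟩ := hev
  have hmin2 : 0 < min ε 1 / 2 := by positivity
  have hmin3 : min ε 1 / 2 ≤ 1 / 2 := by
    gcongr
    exact min_le_right _ _
  have hmin4 : min ε 1 / 2 ≤ ε / 2 := by
    gcongr
    exact min_le_left _ _
  refine ⟨1 - min ε 1 / 2, by linarith, by linarith, ?_⟩
  have hd : dist (1 - min ε 1 / 2) (1:ℝ) < ε := by
    rw [Real.dist_eq, show (1:ℝ) - min ε 1 / 2 - 1 = -(min ε 1 / 2) by ring, abs_neg,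
      abs_of_pos hmin2]
    linarith
  rw [hrw]
  exact (hball hd).le

/-- Duality between power minimization under a QoS (rate) constraint and rate
maximization under the resulting power constraint: if `R_opt` minimizes `tr R`
among PSD `R` with `log det(I + H R Hᴴ) ≥ γ`, then `R_opt` maximizes
`log det(I + H R Hᴴ)` among PSD `R` with `tr R ≤ tr R_opt`, the optimal value
equals `γ`, and the QoS constraint is tight at `R_opt`. -/
theorem power_min_rate_max_duality {d m : ℕ}
    (H : Matrix (Fin d) (Fin m) ℂ) (hH : H ≠ 0) (γ : ℝ) (hγ : 0 < γ)
    (Ropt : Matrix (Fin m) (Fin m) ℂ) (hRopt : Ropt.PosSemidef)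
    (hfeas : γ ≤ Real.log ((1 + H * Ropt * Hᴴ).det.re))
    (hmin : ∀ R : Matrix (Fin m) (Fin m) ℂ, R.PosSemidef →
      γ ≤ Real.log ((1 + H * R * Hᴴ).det.re) → Ropt.trace.re ≤ R.trace.re) :
    (∀ R : Matrix (Fin m) (Fin m) ℂ, R.PosSemidef →
      R.trace.re ≤ Ropt.trace.re →
      Real.log ((1 + H * R * Hᴴ).det.re) ≤ γ) ∧
    Real.log ((1 + H * Ropt * Hᴴ).det.re) = γ := by
  -- Rate of the zero matrix is 0
  have hrate0 : Real.log ((1 + H * (0 : Matrix (Fin m) (Fin m) ℂ) * Hᴴ).det.re) = 0 := by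
    simp
  -- General claim: any PSD R with tr R ≤ tr Ropt has rate ≤ γ
  have claim : ∀ R : Matrix (Fin m) (Fin m) ℂ, R.PosSemidef →
      R.trace.re ≤ Ropt.trace.re → Real.log ((1 + H * R * Hᴴ).det.re) ≤ γ := by
    intro R hR htr
    by_contra hlt
    push_neg at hlt
    -- R ≠ 0
    have hRne : R ≠ 0 := by
      rintro rfl
      rw [hrate0] at hlt
      exact absurd hlt (not_lt.mpr hγ.le)
    have htrR : 0 < R.trace.re := trace_re_pos_aux hR hRne
    -- det re is positive (since log > γ > 0 forces it ≠ 0; in fact > 1)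
    have hdet : (1 + H * R * Hᴴ).det.re ≠ 0 := by
      intro h0
      rw [h0, Real.log_zero] at hlt
      exact absurd hlt (not_lt.mpr hγ.le)
    obtain ⟨t, ht0, ht1, hrt⟩ := scale_down_aux H γ R (by linarith) hdet
    have hPSD : (t • R).PosSemidef := psd_smul_aux hR ht0.le
    have := hmin (t • R) hPSD hrt
    rw [Matrix.trace_smul] at this
    have htre : (t • R.trace).re = t * R.trace.re := by
      simp [Complex.real_smul]
    rw [htre] at this
    nlinarith
  refine ⟨claim, le_antisymm (claim Ropt hRopt le_rfl) hfeas⟩
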